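/- arXiv:0704.0412 — 5 statements merged into one kernel-verified Lean document; each statement's English description precedes it below -/
import Mathlib

section
/- (Berman–Higman) Let G be a finite group and let u be a torsion unit of augmentation one in the integral group ring ZG. If z is an element of the center of G and the coefficient of z in u is nonzero, then u = z. -/
open scoped Classical

/-- The partial augmentation of `u ∈ ℤG` at (the conjugacy class of) `x ∈ G`. -/
noncomputable def partialAug {G : Type*} [Group G] [Fintype G]
    (x : G) (u : MonoidAlgebra ℤ G) : ℤ :=
  ∑ g : G, if IsConj x g then u.coeff g else 0

/-- The augmentation ring homomorphism `ℤG → ℤ`. -/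
noncomputable def augMap (G : Type*) [Group G] : MonoidAlgebra ℤ G →+* ℤ :=
  MonoidAlgebra.liftNCRingHom (RingHom.id ℤ) (1 : G →* ℤ) (fun _ _ => Commute.all _ _)

/-- `V(ℤG)`, the group of units of augmentation one in `ℤG`. -/
noncomputable def V (G : Type*) [Group G] : Subgroup (MonoidAlgebra ℤ G)ˣ :=
  (Units.map (augMap G).toMonoidHom).ker

section Aux

open Polynomial
open scoped Matrix

/-- A multiset of nonnegative reals summing to zero consists of zeros. -/
lemma multiset_eq_zero_of_sum_eq_zero {s : Multiset ℝ} (h0 : ∀ x ∈ s, 0 ≤ x)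
    (hs : s.sum = 0) : ∀ x ∈ s, x = 0 := by
  induction s using Multiset.induction_on with
  | empty => simp
  | cons a t ih =>
    intro x hx
    have ha : 0 ≤ a := h0 a (Multiset.mem_cons_self a t)
    have ht : 0 ≤ t.sum := Multiset.sum_nonneg (fun y hy => h0 y (Multiset.mem_cons_of_mem hy))
    rw [Multiset.sum_cons] at hs
    have ha0 : a = 0 := le_antisymm (by linarith) ha
    have hts : t.sum = 0 := by linarith
    rcases Multiset.mem_cons.mp hx with h | h
    · exact h ▸ ha0
    · exact ih (fun y hy => h0 y (Multiset.mem_cons_of_mem hy)) hts x h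

/-- A unipotent matrix of finite order is the identity (nilpotent-part argument). -/
lemma nilpotent_eq_zero_of_unipotent_pow {ι : Type*} [Fintype ι] [DecidableEq ι]
    {n : ℕ} (hn : 0 < n) (Q : Matrix ι ι ℂ) (h1 : (Q + 1) ^ n = 1) :
    ∀ k : ℕ, Q ^ k = 0 → Q = 0 := by
  intro k
  induction k using Nat.strong_induction_on with
  | _ k ih =>
    match k, ih with
    | 0, ih =>
      intro hk
      have h10 : (1 : Matrix ι ι ℂ) = 0 := by simpa using hk
      calc Q = Q * 1 := (mul_one Q).symm
        _ = 0 := by rw [h10, mul_zero]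
    | 1, ih => intro hk; simpa using hk
    | (k+2), ih =>
      intro hk
      -- binomial expansion
      have hbin := (Commute.one_right Q).add_pow n
      rw [h1] at hbin
      simp only [one_pow, mul_one] at hbin
      -- hbin : 1 = ∑ m in range (n+1), Q ^ m * ↑(n.choose m)
      have hsum : (∑ m ∈ Finset.range n, Q ^ (m+1) * (n.choose (m+1) : Matrix ι ι ℂ)) = 0 := by
        have := hbin
        rw [Finset.sum_range_succ'] at this
        simp only [pow_zero, Nat.choose_zero_right, Nat.cast_one, one_mul] at this
        -- this : 1 = ∑ ... + 1
        have := this.symm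
        rwa [add_eq_right] at this
      have hmul : Q ^ k * (∑ m ∈ Finset.range n, Q ^ (m+1) * (n.choose (m+1) : Matrix ι ι ℂ)) = 0 := by
        rw [hsum, mul_zero]
      rw [Finset.mul_sum] at hmul
      have hterm : ∀ m ∈ Finset.range n, m ≠ 0 →
          Q ^ k * (Q ^ (m+1) * (n.choose (m+1) : Matrix ι ι ℂ)) = 0 := by
        intro m _ hm
        have : Q ^ k * Q ^ (m+1) = 0 := by
          have h2 : k + (m+1) = (k + 2) + (m - 1) := by omega
          rw [← pow_add, h2, pow_add, hk, zero_mul]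
        rw [← mul_assoc, this, zero_mul]
      have hzero : Q ^ k * (Q ^ (0+1) * (n.choose (0+1) : Matrix ι ι ℂ)) = 0 := by
        rw [Finset.sum_eq_single 0 (fun m hm hm0 => hterm m hm hm0)
          (fun h => absurd (Finset.mem_range.mpr hn) h)] at hmul
        exact hmul
      simp only [zero_add, pow_one, Nat.choose_one_right] at hzero
      have hQ1 : Q ^ (k+1) = 0 := by
        have h3 : Q ^ k * (Q * (n : Matrix ι ι ℂ)) = Q ^ (k+1) * (n : Matrix ι ι ℂ) := by
          rw [← mul_assoc, ← pow_succ]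
        rw [h3] at hzero
        have h4 : (n : ℂ) • Q ^ (k+1) = 0 := by
          have hcast : (n : Matrix ι ι ℂ) = (n : ℂ) • (1 : Matrix ι ι ℂ) := by
            rw [← map_natCast (algebraMap ℂ (Matrix ι ι ℂ)) n, Algebra.algebraMap_eq_smul_one]
          rw [hcast, mul_smul_comm, mul_one] at hzero
          exact hzero
        rcases smul_eq_zero.mp h4 with h | h
        · exact absurd h (by exact_mod_cast hn.ne')
        · exact h
      exact ih (k+1) (by omega) hQ1

/-- Roots of the characteristic polynomial of a matrix of finite order are roots of unity. -/
lemma root_pow_eq_one {ι : Type*} [Fintype ι] [DecidableEq ι] {M : Matrix ι ι ℂ} {n : ℕ}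
    (hM : M ^ n = 1) {μ : ℂ} (hμ : μ ∈ M.charpoly.roots) : μ ^ n = 1 := by
  have hroot : M.charpoly.IsRoot μ :=
    (Polynomial.mem_roots (M.charpoly_monic.ne_zero)).mp hμ
  have hdet : (Matrix.scalar ι μ - M).det = 0 := by
    have heval := eval_det (Matrix.charmatrix M) μ
    rw [Matrix.matPolyEquiv_charmatrix] at heval
    have : Polynomial.eval (Matrix.scalar ι μ) (X - C M) = Matrix.scalar ι μ - M := by
      simp
    rw [this] at heval
    have hch : Polynomial.eval μ M.charpoly = 0 := hroot
    rw [Matrix.charpoly] at hch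
    rw [← heval, hch]
  obtain ⟨v, hv0, hv⟩ := Matrix.exists_mulVec_eq_zero_iff.mpr hdet
  have hMv : M *ᵥ v = μ • v := by
    have hsub : (Matrix.scalar ι μ) *ᵥ v - M *ᵥ v = 0 := by
      rw [← Matrix.sub_mulVec]; exact hv
    have hscal : (Matrix.scalar ι μ) *ᵥ v = μ • v := by
      ext i
      simp [Matrix.scalar, Matrix.mulVec_diagonal]
    rw [hscal] at hsub
    have := sub_eq_zero.mp hsub
    exact this.symm
  have hpow : ∀ k : ℕ, (M ^ k) *ᵥ v = μ ^ k • v := by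
    intro k
    induction k with
    | zero => simp
    | succ k ihk =>
      rw [pow_succ, ← Matrix.mulVec_mulVec, hMv, Matrix.mulVec_smul, ihk, smul_smul,
        ← pow_succ']
  have hfin := hpow n
  rw [hM] at hfin
  obtain ⟨i, hi⟩ := Function.ne_iff.mp hv0
  have : v i = (μ ^ n) * v i := by
    have := congrFun hfin i
    simpa [Matrix.one_mulVec] using this
  have hmu : (μ ^ n - 1) * v i = 0 := by ring_nf; linear_combination -this
  rcases mul_eq_zero.mp hmu with h | h
  · linear_combination h
  · exact absurd h hi

/-- A complex number of norm one with real part one is one. -/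
lemma complex_eq_one_of_re_eq_one {c : ℂ} (hnorm : ‖c‖ = 1) (hre : c.re = 1) :
    c = 1 := by
  have h2 : c.re * c.re + c.im * c.im = 1 := by
    have := Complex.sq_norm c
    rw [hnorm] at this
    simpa [Complex.normSq_apply] using this.symm
  have him : c.im = 0 := by nlinarith
  exact Complex.ext (by simp [hre]) (by simp [him])

/-- The coefficient-casting ring hom `ℤG →+* ℂG`. -/
noncomputable def intCastHom (G : Type*) [Group G] :
    MonoidAlgebra ℤ G →+* MonoidAlgebra ℂ G :=
  MonoidAlgebra.liftNCRingHom (MonoidAlgebra.singleOneRingHom.comp (Int.castRingHom ℂ))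
    (MonoidAlgebra.of ℂ G) (fun r g => by
      simp only [RingHom.coe_comp, Function.comp_apply, MonoidAlgebra.singleOneRingHom_apply,
        MonoidAlgebra.of_apply]
      exact MonoidAlgebra.single_commute_single (Commute.one_left g) (Commute.all _ _))

lemma intCastHom_single {G : Type*} [Group G] (g : G) (r : ℤ) :
    intCastHom G (MonoidAlgebra.single g r) = MonoidAlgebra.single g (r : ℂ) := by
  simp [intCastHom, MonoidAlgebra.liftNCRingHom, MonoidAlgebra.liftNC_single,
    MonoidAlgebra.singleOneRingHom, MonoidAlgebra.intCast_def, MonoidAlgebra.single_mul_single]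

lemma intCastHom_apply {G : Type*} [Group G] (v : MonoidAlgebra ℤ G) (g : G) :
    (intCastHom G v).coeff g = ((v.coeff g : ℤ) : ℂ) := by
  induction v using MonoidAlgebra.induction_linear with
  | zero => simp
  | add f h hf hh =>
    rw [map_add]
    show (intCastHom G f + intCastHom G h).coeff g = _
    rw [MonoidAlgebra.coeff_add, Finsupp.add_apply, hf, hh, MonoidAlgebra.coeff_add, Finsupp.add_apply]
    push_cast
    ring
  | single a b =>
    rw [intCastHom_single]
    show Finsupp.single a (b : ℂ) g = ((Finsupp.single a b g : ℤ) : ℂ)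
    rw [Finsupp.single_apply, Finsupp.single_apply]
    split <;> simp


lemma augMap_single {G : Type*} [Group G] (g : G) (r : ℤ) :
    augMap G (MonoidAlgebra.single g r) = r := by
  simp [augMap, MonoidAlgebra.liftNCRingHom, MonoidAlgebra.liftNC_single]

lemma multiset_sum_map_sub (s : Multiset ℂ) (f g : ℂ → ℝ) :
    (s.map (fun x => f x - g x)).sum = (s.map f).sum - (s.map g).sum := by
  induction s using Multiset.induction_on with
  | empty => simp
  | cons a t ih => simp only [Multiset.map_cons, Multiset.sum_cons, ih]; ring

/-- Key lemma: a torsion element of `ℤG` with nonzero coefficient at `1` is `± 1`. -/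
lemma key_lemma {G : Type*} [Group G] [Fintype G] (v : MonoidAlgebra ℤ G) {n : ℕ} (hn : 0 < n)
    (hv : v ^ n = 1) (h1 : v.coeff 1 ≠ 0) :
    v = MonoidAlgebra.single 1 (v.coeff 1) ∧ (v.coeff 1 = 1 ∨ v.coeff 1 = -1) := by
  set a : ℤ := v.coeff 1 with ha
  set w : MonoidAlgebra ℂ G := intCastHom G v with hw
  have hw1 : w.coeff 1 = (a : ℂ) := intCastHom_apply v 1
  have hwn : w ^ n = 1 := by rw [hw, ← map_pow, hv, map_one]
  set b : Module.Basis G ℂ (MonoidAlgebra ℂ G) := MonoidAlgebra.basis G ℂ with hbdef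
  have hb : ∀ g : G, b g = MonoidAlgebra.single g (1:ℂ) := fun g => rfl
  set M : Matrix G G ℂ := Algebra.leftMulMatrix b w with hM
  have hMn : M ^ n = 1 := by rw [hM, ← map_pow, hwn, map_one]
  set N : ℕ := Fintype.card G with hN
  have hNpos : 0 < N := Fintype.card_pos
  -- the trace of M is N * a
  have htr : M.trace = (N : ℂ) * (a : ℂ) := by
    have h : ∀ g : G, M g g = w.coeff 1 := by
      intro g
      rw [hM, Algebra.leftMulMatrix_eq_repr_mul, hb]
      have hr : (b.repr (w * MonoidAlgebra.single g (1:ℂ))) g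
          = (w * MonoidAlgebra.single g (1:ℂ)).coeff g := by
        rw [hbdef]; rfl
      rw [hr, MonoidAlgebra.coeff_mul_single_apply]
      simp
    rw [Matrix.trace]
    simp only [Matrix.diag_apply, h, hw1]
    rw [Finset.sum_const, Finset.card_univ, nsmul_eq_mul]
  set s : Multiset ℂ := M.charpoly.roots with hs
  have hsum : s.sum = (N : ℂ) * (a : ℂ) := by
    rw [hs, ← Matrix.trace_eq_sum_roots_charpoly, htr]
  have hcard : Multiset.card s = N := by
    rw [hs, (Polynomial.splits_iff_card_roots).mp (IsAlgClosed.splits _),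
      Matrix.charpoly_natDegree_eq_dim]
  have hroots1 : ∀ μ ∈ s, μ ^ n = 1 := fun μ hμ => root_pow_eq_one hMn hμ
  have habs : ∀ μ ∈ s, ‖μ‖ = 1 := by
    intro μ hμ
    have hpow := hroots1 μ hμ
    have h := congrArg norm hpow
    rw [norm_pow, norm_one] at h
    exact (pow_eq_one_iff_of_nonneg (norm_nonneg _) hn.ne').mp h
  -- |a| = 1
  have hnormsum : (s.map (fun z : ℂ => ‖z‖)).sum = (N : ℝ) := by
    have hmapeq : s.map (fun z : ℂ => ‖z‖) = s.map (fun _ => (1:ℝ)) :=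
      Multiset.map_congr rfl (fun x hx => by rw [habs x hx])
    rw [hmapeq, Multiset.map_const', Multiset.sum_replicate, hcard, nsmul_eq_mul, mul_one]
  have hle : (N : ℝ) * |(a : ℝ)| ≤ (N : ℝ) := by
    have h2 := norm_multiset_sum_le s
    rw [hnormsum, hsum] at h2
    calc (N : ℝ) * |(a : ℝ)| = ‖((N : ℂ) * (a : ℂ))‖ := by
          rw [norm_mul, Complex.norm_natCast,
            Complex.norm_intCast]
      _ ≤ (N : ℝ) := h2
  have haone : a = 1 ∨ a = -1 := by
    have h3 : |(a : ℝ)| ≤ 1 := by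
      by_contra hcon
      push_neg at hcon
      have hN0 : (0:ℝ) < (N:ℝ) := by exact_mod_cast hNpos
      nlinarith
    have h4 : |a| ≤ 1 := by exact_mod_cast (by rw [← Int.cast_abs] at h3; exact_mod_cast h3 : ((|a| : ℤ) : ℝ) ≤ 1)
    have h5 := abs_le.mp h4
    omega
  have ha2 : a * a = 1 := by rcases haone with h | h <;> rw [h] <;> ring
  have ha2c : (a : ℂ) * (a : ℂ) = 1 := by exact_mod_cast congrArg (fun x : ℤ => (x : ℂ)) ha2
  have hane : (a : ℂ) ≠ 0 := Int.cast_ne_zero.mpr h1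
  have habsa : ‖((a : ℂ))‖ = 1 := by
    rw [Complex.norm_intCast]
    rcases haone with h | h <;> rw [h] <;> norm_num
  -- all roots are equal to a
  have hall : ∀ μ ∈ s, μ = (a : ℂ) := by
    have tsum : (s.map (fun μ : ℂ => 1 - ((a:ℂ) * μ).re)).sum = 0 := by
      rw [multiset_sum_map_sub]
      have e1 : (s.map (fun _ : ℂ => (1:ℝ))).sum = (N:ℝ) := by
        rw [Multiset.map_const', Multiset.sum_replicate, hcard, nsmul_eq_mul, mul_one]
      have e2 : (s.map (fun μ : ℂ => ((a:ℂ) * μ).re)).sum = (N:ℝ) := by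
        have e3 := Complex.reAddGroupHom.map_multiset_sum (s.map (fun μ : ℂ => (a:ℂ) * μ))
        rw [Multiset.map_map] at e3
        simp only [Complex.coe_reAddGroupHom, Function.comp_def] at e3
        rw [← e3, Multiset.sum_map_mul_left, Multiset.map_id', hsum]
        have h5 : (a:ℂ) * ((N:ℂ) * (a:ℂ)) = (N:ℂ) := by
          rw [mul_comm ((N:ℂ)) ((a:ℂ)), ← mul_assoc, ha2c, one_mul]
        rw [h5, Complex.natCast_re]
      rw [e1, e2, sub_self]
    have tnonneg : ∀ x ∈ s.map (fun μ : ℂ => 1 - ((a:ℂ) * μ).re), 0 ≤ x := by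
      intro x hx
      obtain ⟨μ, hμ, rfl⟩ := Multiset.mem_map.mp hx
      have hre : ((a:ℂ) * μ).re ≤ 1 := by
        calc ((a:ℂ) * μ).re ≤ ‖(a:ℂ) * μ‖ := Complex.re_le_norm _
          _ = 1 := by
            rw [norm_mul, habs μ hμ, mul_one, habsa]
      linarith
    intro μ hμ
    have hzero := multiset_eq_zero_of_sum_eq_zero tnonneg tsum _
      (Multiset.mem_map_of_mem _ hμ)
    have hre1 : ((a:ℂ) * μ).re = 1 := by linarith [hzero]
    have habs1 : ‖(a:ℂ) * μ‖ = 1 := by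
      rw [norm_mul, habs μ hμ, mul_one, habsa]
    have := complex_eq_one_of_re_eq_one habs1 hre1
    calc μ = ((a:ℂ) * (a:ℂ)) * μ := by rw [ha2c, one_mul]
      _ = (a:ℂ) * ((a:ℂ) * μ) := by ring
      _ = (a:ℂ) := by rw [this, mul_one]
  -- charpoly = (X - C a)^N
  have hcp : M.charpoly = (Polynomial.X - Polynomial.C (a:ℂ)) ^ N := by
    rw [(IsAlgClosed.splits _).eq_prod_roots_of_monic
      M.charpoly_monic]
    have hrep : M.charpoly.roots.map (fun μ : ℂ => Polynomial.X - Polynomial.C μ)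
        = Multiset.replicate N (Polynomial.X - Polynomial.C (a:ℂ)) := by
      rw [Multiset.eq_replicate]
      constructor
      · rw [Multiset.card_map]; exact hcard
      · intro p hp
        obtain ⟨μ, hμ, rfl⟩ := Multiset.mem_map.mp hp
        rw [hall μ hμ]
    rw [hrep, Multiset.prod_replicate]
  have hP : (M - algebraMap ℂ (Matrix G G ℂ) (a:ℂ)) ^ N = 0 := by
    have hch := M.aeval_self_charpoly
    rw [hcp] at hch
    rw [map_pow, map_sub, Polynomial.aeval_X, Polynomial.aeval_C] at hch
    exact hch
  set Q : Matrix G G ℂ := (a:ℂ) • (M - algebraMap ℂ (Matrix G G ℂ) (a:ℂ)) with hQ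
  have hQpow : Q ^ N = 0 := by rw [hQ, _root_.smul_pow, hP, smul_zero]
  have hQ1 : Q + 1 = (a:ℂ) • M := by
    rw [hQ, smul_sub]
    have : (a:ℂ) • algebraMap ℂ (Matrix G G ℂ) (a:ℂ) = 1 := by
      rw [Algebra.smul_def, ← map_mul, ha2c, map_one]
    rw [this]
    abel
  have h2n : (Q + 1) ^ (2 * n) = 1 := by
    rw [hQ1, _root_.smul_pow]
    have e1 : ((a:ℂ)) ^ (2 * n) = 1 := by
      rw [pow_mul, show (a:ℂ) ^ 2 = 1 by rw [sq]; exact ha2c, one_pow]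
    have e2 : M ^ (2 * n) = 1 := by
      rw [mul_comm 2 n, pow_mul, hMn, one_pow]
    rw [e1, e2, one_smul]
  have hQ0 : Q = 0 :=
    nilpotent_eq_zero_of_unipotent_pow (by positivity) Q h2n N hQpow
  have hMa : M = algebraMap ℂ (Matrix G G ℂ) (a:ℂ) := by
    rw [hQ] at hQ0
    rcases smul_eq_zero.mp hQ0 with h | h
    · exact absurd h hane
    · exact sub_eq_zero.mp h
  have hwa : w = algebraMap ℂ (MonoidAlgebra ℂ G) (a:ℂ) := by
    apply Algebra.leftMulMatrix_injective b
    rw [← hM, hMa, AlgHom.commutes]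
  refine ⟨?_, haone⟩
  apply MonoidAlgebra.ext
  apply Finsupp.ext
  intro g
  have hcoe := intCastHom_apply v g
  rw [← hw, hwa] at hcoe
  have halg : (algebraMap ℂ (MonoidAlgebra ℂ G) (a:ℂ)).coeff g = Finsupp.single 1 (a:ℂ) g := by
    rw [MonoidAlgebra.coe_algebraMap]
    simp
  rw [halg] at hcoe
  apply @Int.cast_injective ℂ _ _
  rw [← hcoe]
  show Finsupp.single (1:G) (a:ℂ) g = ((Finsupp.single (1:G) a g : ℤ) : ℂ)
  rw [Finsupp.single_apply, Finsupp.single_apply]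
  split <;> simp

end Aux

/-- Berman–Higman: a torsion unit of augmentation one with nonzero coefficient
at a central group element `z` equals `z`. -/
theorem stmt1 {G : Type*} [Group G] [Fintype G] (u : (MonoidAlgebra ℤ G)ˣ)
    (hu : u ∈ V G) (htor : IsOfFinOrder u)
    (z : G) (hz : z ∈ Subgroup.center G)
    (hcoeff : (u : MonoidAlgebra ℤ G).coeff z ≠ 0) :
    (u : MonoidAlgebra ℤ G) = MonoidAlgebra.single z 1 := by
  have hzinv : (MonoidAlgebra.single z 1 : MonoidAlgebra ℤ G) * MonoidAlgebra.single z⁻¹ 1 = 1 := by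
    rw [MonoidAlgebra.single_mul_single, mul_inv_cancel, mul_one, MonoidAlgebra.one_def]
  have hzinv' : (MonoidAlgebra.single z⁻¹ 1 : MonoidAlgebra ℤ G) * MonoidAlgebra.single z 1 = 1 := by
    rw [MonoidAlgebra.single_mul_single, inv_mul_cancel, mul_one, MonoidAlgebra.one_def]
  set zu : (MonoidAlgebra ℤ G)ˣ :=
    ⟨MonoidAlgebra.single z 1, MonoidAlgebra.single z⁻¹ 1, hzinv, hzinv'⟩ with hzu
  have hzc : ∀ g : G, g * z⁻¹ = z⁻¹ * g := by
    intro g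
    have hz' : z⁻¹ ∈ Subgroup.center G := inv_mem hz
    exact Subgroup.mem_center_iff.mp hz' g
  have hcomm : Commute u zu := by
    apply Units.ext
    show ((u : MonoidAlgebra ℤ G) * MonoidAlgebra.single z 1 : MonoidAlgebra ℤ G) = MonoidAlgebra.single z 1 * (u : MonoidAlgebra ℤ G)
    apply MonoidAlgebra.ext
    apply Finsupp.ext
    intro g
    rw [MonoidAlgebra.coeff_mul_single_apply, MonoidAlgebra.coeff_single_mul_apply, mul_one, one_mul]
    rw [hzc g]
  -- finite order facts
  set mz : ℕ := orderOf z with hmz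
  have hmzpos : 0 < mz := orderOf_pos z
  have hzupow : zu ^ mz = 1 := by
    apply Units.ext
    rw [Units.val_pow_eq_pow_val]
    show (MonoidAlgebra.single z 1 : MonoidAlgebra ℤ G) ^ mz = 1
    rw [MonoidAlgebra.single_pow, pow_orderOf_eq_one, one_pow, MonoidAlgebra.one_def]
  set m : ℕ := orderOf u * mz with hm
  have hmpos : 0 < m := Nat.mul_pos htor.orderOf_pos hmzpos
  have hum : (u * zu⁻¹) ^ m = 1 := by
    rw [(hcomm.inv_right).mul_pow]
    have e1 : u ^ m = 1 := by rw [hm, pow_mul, pow_orderOf_eq_one, one_pow]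
    have e2 : (zu⁻¹) ^ m = 1 := by
      rw [inv_pow, hm, mul_comm (orderOf u) mz, pow_mul, hzupow, one_pow, inv_one]
    rw [e1, e2, one_mul]
  -- pass to the ring
  set v : MonoidAlgebra ℤ G := (u : MonoidAlgebra ℤ G) * MonoidAlgebra.single z⁻¹ (1:ℤ) with hvdef
  have hvcoe : ((u * zu⁻¹ : (MonoidAlgebra ℤ G)ˣ) : MonoidAlgebra ℤ G) = v := by
    rw [Units.val_mul]
    rfl
  have hvm : v ^ m = 1 := by
    rw [← hvcoe, ← Units.val_pow_eq_pow_val, hum, Units.val_one]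
  have hv1 : v.coeff 1 = (u : MonoidAlgebra ℤ G).coeff z := by
    rw [hvdef, MonoidAlgebra.coeff_mul_single_apply, one_mul, inv_inv, mul_one]
  have hv1ne : v.coeff 1 ≠ 0 := by rw [hv1]; exact hcoeff
  obtain ⟨heq, _⟩ := key_lemma v hmpos hvm hv1ne
  -- augmentation one
  have haugu : augMap G (↑u : MonoidAlgebra ℤ G) = 1 := by
    have h := hu
    rw [V, MonoidHom.mem_ker] at h
    have := congrArg (Units.val) h
    rw [Units.coe_map] at this
    exact this
  have haugv : augMap G v = 1 := by
    rw [hvdef, map_mul, haugu, augMap_single, one_mul]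
  have hv11 : v.coeff 1 = 1 := by
    rw [heq, augMap_single] at haugv
    exact haugv
  rw [hv11] at heq
  have hone : v = 1 := by rw [heq, MonoidAlgebra.one_def]
  calc (u : MonoidAlgebra ℤ G)
      = ↑u * (MonoidAlgebra.single z⁻¹ 1 * MonoidAlgebra.single z 1) := by
        rw [hzinv', mul_one]
    _ = v * MonoidAlgebra.single z 1 := by rw [hvdef, mul_assoc]
    _ = MonoidAlgebra.single z 1 := by rw [hone, one_mul]
end

section
/- Let G be a finite group and u a torsion unit in V(ZG) of order n. Let s be a natural number coprime to n with st ≡ 1 (mod n). Then for every x in G whose order divides n, the partial augmentations satisfy ε_x(u^s) = ε_{x^t}(u). -/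
open scoped Classical

open Polynomial

lemma dvd_of_eval_nodes {F : Type*} [Field F] {n : ℕ} (hn : 0 < n) {ζ : F}
    (hζ : IsPrimitiveRoot ζ n) {f : F[X]} (hf : ∀ i, i < n → f.eval (ζ ^ i) = 0) :
    (X ^ n - 1 : F[X]) ∣ f := by
  have hmonic : (X ^ n - 1 : F[X]).Monic := by
    simpa using monic_X_pow_sub_C (1 : F) hn.ne'
  rw [← Polynomial.modByMonic_eq_zero_iff_dvd hmonic]
  set r := f %ₘ (X ^ n - 1) with hr
  have hev : ∀ i : Fin n, r.eval (ζ ^ (i : ℕ)) = 0 := by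
    intro i
    have := Polynomial.modByMonic_eq_sub_mul_div f (X ^ n - 1)
    rw [← hr] at this
    rw [this]
    simp only [eval_sub, eval_mul, eval_pow, eval_X, eval_one]
    rw [← pow_mul, mul_comm (i : ℕ) n, pow_mul, hζ.pow_eq_one, one_pow,
      hf _ i.2]
    ring
  by_cases h0 : r = 0
  · exact h0
  · exfalso
    apply h0
    have hd : r.natDegree < n := by
      have := Polynomial.degree_modByMonic_lt f hmonic
      rw [← hr] at this
      have hdeg : (X ^ n - 1 : F[X]).degree = n := by
        simpa using Polynomial.degree_X_pow_sub_C hn (1 : F)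
      rw [hdeg] at this
      exact Polynomial.natDegree_lt_iff_degree_lt h0 |>.2 this
    refine Polynomial.eq_zero_of_natDegree_lt_card_of_eval_eq_zero r
      (f := fun i : Fin n => ζ ^ (i : ℕ)) ?_ hev ?_
    · intro i j hij
      exact Fin.ext (hζ.pow_inj i.2 j.2 hij)
    · simpa using hd

open scoped Classical in
lemma trace_idem_nat {d : Type*} [Fintype d] [DecidableEq d] {L : Type*} [Field L]
    [CharZero L] {P : Matrix d d L} (h : P * P = P) : ∃ m : ℕ, P.trace = (m : L) := by
  have hE : P.mulVecLin ∘ₗ P.mulVecLin = P.mulVecLin := by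
    rw [← Matrix.mulVecLin_mul, h]
  obtain ⟨p, hp⟩ := (LinearMap.isProj_iff_isIdempotentElem _).2 hE
  refine ⟨Module.finrank L p, ?_⟩
  have := hp.trace
  rw [← this]
  have h1 : LinearMap.trace L (d → L) P.mulVecLin = P.trace := by
    rw [LinearMap.trace_eq_matrix_trace L (Pi.basisFun L d)]
    congr 1
    rw [LinearMap.toMatrix_eq_toMatrix']
    have : P.mulVecLin = Matrix.toLin' P := by
      ext v
      simp [Matrix.mulVecLin_apply, Matrix.toLin'_apply]
    rw [this, LinearMap.toMatrix'_toLin']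
  rw [h1]

lemma trace_map_ringHom {d : Type*} [Fintype d] {R S : Type*} [CommRing R] [CommRing S]
    (τ : R →+* S) (A : Matrix d d R) : (A.map τ).trace = τ A.trace := by
  simp [Matrix.trace, Matrix.diag, map_sum]

lemma map_aeval_matrix {d : Type*} [Fintype d] [DecidableEq d] {L : Type*} [CommRing L]
    (τ : L →+* L) (A : Matrix d d L) (hA : A.map τ = A) (f : Polynomial L) :
    (Polynomial.aeval A f).map τ = Polynomial.aeval A (f.map τ) := by
  have h1 : (Polynomial.aeval A f).map τ = τ.mapMatrix (Polynomial.aeval A f) := rfl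
  have hcomp : (τ.mapMatrix : Matrix d d L →+* Matrix d d L).comp
      (algebraMap L (Matrix d d L)) = (algebraMap L (Matrix d d L)).comp τ := by
    ext a : 1
    simp only [RingHom.comp_apply, RingHom.mapMatrix_apply, Matrix.algebraMap_eq_diagonal]
    ext i j
    by_cases hij : i = j <;> simp [Matrix.diagonal, Matrix.map_apply, hij, Pi.algebraMap_apply]
  have hA' : τ.mapMatrix A = A := hA
  rw [h1, Polynomial.aeval_def, Polynomial.hom_eval₂, hcomp, hA', Polynomial.aeval_def,
    Polynomial.eval₂_map]

lemma map_basisDivisor {L : Type*} [Field L] (τ : L →+* L) (x y : L) :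
    (Lagrange.basisDivisor x y).map τ = Lagrange.basisDivisor (τ x) (τ y) := by
  simp [Lagrange.basisDivisor, Polynomial.map_mul, Polynomial.map_sub, map_inv₀]

open scoped Classical in
lemma trace_pow_coprime {d : Type*} [Fintype d] [DecidableEq d] {n s : ℕ} (hn : 0 < n)
    (hs : Nat.Coprime s n) (M : Matrix d d ℚ) (hM : M ^ n = 1) :
    (M ^ s).trace = M.trace := by
  haveI : NeZero n := ⟨hn.ne'⟩
  set np : ℕ+ := ⟨n, hn⟩ with hnp
  set L := CyclotomicField n ℚ with hL
  haveI : IsCyclotomicExtension {n} ℚ L :=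
    haveI : NeZero (n : ℚ) := ⟨by exact_mod_cast hn.ne'⟩
    CyclotomicField.isCyclotomicExtension (n := n) (K := ℚ)
  set ζ : L := IsCyclotomicExtension.zeta n ℚ L with hzeta
  have hζ' : IsPrimitiveRoot ζ n := IsCyclotomicExtension.zeta_spec n ℚ L
  have hζ : IsPrimitiveRoot ζ n := hζ'
  haveI : CharZero L := charZero_of_injective_algebraMap (algebraMap ℚ L).injective
  set φ : Matrix d d ℚ →+* Matrix d d L := (algebraMap ℚ L).mapMatrix with hφ
  set A : Matrix d d L := φ M with hA
  have hAn : A ^ n = 1 := by rw [hA, ← map_pow, hM, map_one]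
  have hzmod : ∀ a b : ℕ, a % n = b % n → ζ ^ a = ζ ^ b := by
    intro a b hab
    conv_lhs => rw [← Nat.div_add_mod a n]
    conv_rhs => rw [← Nat.div_add_mod b n]
    rw [pow_add, pow_add, pow_mul, pow_mul, hζ.pow_eq_one, one_pow, one_pow, hab]
  set v : ZMod n → L := fun k => ζ ^ k.val with hv
  have hvinj : Function.Injective v := by
    intro k l hkl
    have h2 := hζ.pow_inj (ZMod.val_lt k) (ZMod.val_lt l) hkl
    have := congrArg (Nat.cast : ℕ → ZMod n) h2
    simpa [ZMod.natCast_val, ZMod.cast_id] using this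
  have hvInjOn : Set.InjOn v (Finset.univ : Finset (ZMod n)) := fun a _ b _ h => hvinj h
  have haev : ∀ f : Polynomial L, (∀ k : ZMod n, f.eval (v k) = 0) →
      Polynomial.aeval A f = 0 := by
    intro f hf
    have hfe : ∀ i, i < n → f.eval (ζ ^ i) = 0 := by
      intro i hi
      have h4 : (ζ : L) ^ i = v (i : ZMod n) := by
        rw [hv]
        show _ = ζ ^ ((i : ZMod n).val)
        rw [ZMod.val_natCast_of_lt hi]
      rw [h4]; exact hf _
    obtain ⟨q, hq⟩ := dvd_of_eval_nodes hn hζ hfe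
    rw [hq, map_mul]
    have h3 : Polynomial.aeval A ((Polynomial.X : Polynomial L) ^ n - 1) = 0 := by
      simp [map_sub, map_pow, hAn]
    rw [h3, zero_mul]
  set B : ZMod n → Polynomial L := fun k => Lagrange.basis Finset.univ v k with hB
  set P : ZMod n → Matrix d d L := fun k => Polynomial.aeval A (B k) with hP
  have hBeval : ∀ k l : ZMod n, (B k).eval (v l) = if k = l then 1 else 0 := by
    intro k l
    by_cases h : k = l
    · subst h; simp [hB, Lagrange.eval_basis_self hvInjOn (Finset.mem_univ k)]
    · simp only [hB, if_neg h]
      exact Lagrange.eval_basis_of_ne h (Finset.mem_univ l)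
  have hMj : ∀ j : ℕ, A ^ j = ∑ k : ZMod n, (v k) ^ j • P k := by
    intro j
    have h0 : Polynomial.aeval A ((Polynomial.X : Polynomial L) ^ j
        - ∑ k : ZMod n, Polynomial.C ((v k) ^ j) * B k) = 0 := by
      apply haev
      intro l
      simp only [Polynomial.eval_sub, Polynomial.eval_pow, Polynomial.eval_X,
        Polynomial.eval_finset_sum, Polynomial.eval_mul, Polynomial.eval_C]
      rw [Finset.sum_eq_single l]
      · rw [hBeval l l]; simp
      · intro b _ hb; rw [hBeval b l]; simp [hb]
      · simp
    rw [map_sub, sub_eq_zero, map_pow, Polynomial.aeval_X, map_sum] at h0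
    rw [h0]
    refine Finset.sum_congr rfl fun k _ => ?_
    rw [map_mul, Polynomial.aeval_C, ← Algebra.smul_def]
  have hPidem : ∀ k, P k * P k = P k := by
    intro k
    have h0 : Polynomial.aeval A (B k * B k - B k) = 0 := by
      apply haev
      intro l
      simp only [Polynomial.eval_sub, Polynomial.eval_mul, hBeval k l]
      by_cases h : k = l <;> simp [h]
    rw [map_sub, map_mul, sub_eq_zero] at h0
    exact h0
  -- the Galois automorphism
  have hirr : Irreducible (Polynomial.cyclotomic n ℚ) := Polynomial.cyclotomic.irreducible_rat hn
  have hmin : Polynomial.cyclotomic n ℚ = minpoly ℚ ζ :=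
    hζ.minpoly_eq_cyclotomic_of_irreducible hirr
  have hroot : Polynomial.aeval (ζ ^ s) (minpoly ℚ ((hζ'.powerBasis ℚ).gen)) = 0 := by
    rw [IsPrimitiveRoot.powerBasis_gen, ← hmin, Polynomial.aeval_def, ← Polynomial.eval_map,
      Polynomial.map_cyclotomic]
    exact (hζ.pow_of_coprime s hs).isRoot_cyclotomic hn
  set σ : L →ₐ[ℚ] L := (hζ'.powerBasis ℚ).lift (ζ ^ s) hroot with hσ
  have hσgen : σ ζ = ζ ^ s := by
    have := PowerBasis.lift_gen (hζ'.powerBasis ℚ) (ζ ^ s) hroot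
    rwa [IsPrimitiveRoot.powerBasis_gen] at this
  set τ : L →+* L := σ.toRingHom with hτ
  have hτfix : A.map τ = A := by
    ext i j
    simp only [hA, hφ, RingHom.mapMatrix_apply, Matrix.map_apply, Matrix.map_map]
    exact σ.commutes _
  set sb : ZMod n := (s : ZMod n) with hsb
  set su : (ZMod n)ˣ := ZMod.unitOfCoprime s hs with hsu
  have hsu' : (su : ZMod n) = sb := ZMod.coe_unitOfCoprime s hs
  have hvalmul : ∀ k : ZMod n, (k * sb).val % n = (k.val * s) % n := by
    intro k
    rw [ZMod.val_mul, hsb, ZMod.val_natCast, Nat.mod_mod_of_dvd, Nat.mul_mod,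
      Nat.mod_mod_of_dvd, ← Nat.mul_mod] <;> exact dvd_refl n
  have hτv : ∀ k : ZMod n, τ (v k) = v (k * sb) := by
    intro k
    show τ (ζ ^ k.val) = ζ ^ (k * sb).val
    rw [map_pow]
    show (σ ζ) ^ k.val = _
    rw [hσgen, ← pow_mul]
    apply hzmod
    rw [hvalmul k, Nat.mul_comm s k.val]
  have hvpow : ∀ k : ZMod n, v k ^ s = v (k * sb) := by
    intro k
    show (ζ ^ k.val) ^ s = ζ ^ (k * sb).val
    rw [← pow_mul]
    apply hzmod
    rw [hvalmul k]
  have hτP : ∀ k : ZMod n, (P k).map τ = P (k * sb) := by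
    intro k
    rw [hP]
    rw [map_aeval_matrix τ A hτfix (B k)]
    congr 1
    rw [hB]
    show (Lagrange.basis Finset.univ v k).map τ = Lagrange.basis Finset.univ v (k * sb)
    unfold Lagrange.basis
    rw [Polynomial.map_prod]
    rw [Finset.prod_congr rfl (fun j _ => map_basisDivisor τ (v k) (v j))]
    have hcancel : ∀ a b : ZMod n, a * sb = b * sb → a = b := by
      intro a b hab
      rw [← hsu'] at hab
      have h1 : a * ↑su * ((su⁻¹ : (ZMod n)ˣ) : ZMod n)
          = b * ↑su * ((su⁻¹ : (ZMod n)ˣ) : ZMod n) := by rw [hab]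
      rwa [Units.mul_inv_cancel_right, Units.mul_inv_cancel_right] at h1
    have hmem : ∀ i : ZMod n, i ∈ Finset.univ.erase k ↔
        (Units.mulRight su) i ∈ Finset.univ.erase (k * sb) := by
      intro i
      simp only [Finset.mem_erase, Finset.mem_univ, and_true, Units.mulRight_apply, hsu']
      constructor
      · intro h hcon; exact h (hcancel _ _ hcon)
      · intro h hcon; exact h (by rw [hcon])
    refine Finset.prod_equiv (Units.mulRight su) hmem ?_
    intro i _
    simp only [Units.mulRight_apply, hsu']
    rw [hτv, hτv]
  set c : ZMod n → L := fun k => (P k).trace with hc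
  have hcinv : ∀ k : ZMod n, c (k * sb) = c k := by
    intro k
    obtain ⟨m, hm⟩ := trace_idem_nat (hPidem k)
    have h1 : (P (k * sb)).trace = τ ((P k).trace) := by
      rw [← hτP k, trace_map_ringHom]
    show (P (k * sb)).trace = (P k).trace
    rw [h1, hm, map_natCast]
  have htr : ∀ j : ℕ, (A ^ j).trace = ∑ k : ZMod n, v k ^ j * c k := by
    intro j
    rw [hMj j, Matrix.trace_sum]
    exact Finset.sum_congr rfl fun k _ => by rw [Matrix.trace_smul, smul_eq_mul]
  have hkey : (A ^ s).trace = A.trace := by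
    have h1 : (A ^ s).trace = ∑ k : ZMod n, v (k * sb) * c (k * sb) := by
      rw [htr s]
      exact Finset.sum_congr rfl fun k _ => by rw [hvpow k, hcinv k]
    have h2 : ∑ k : ZMod n, v (k * sb) * c (k * sb) = ∑ k : ZMod n, v k * c k :=
      Fintype.sum_equiv (Units.mulRight su) _ _
        (fun k => by simp only [Units.mulRight_apply, hsu'])
    have h3 : A.trace = ∑ k : ZMod n, v k * c k := by
      have h4 := htr 1
      simpa using h4
    rw [h1, h2, ← h3]
  have hs1 : (A ^ s).trace = algebraMap ℚ L ((M ^ s).trace) := by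
    rw [hA, ← map_pow, hφ, RingHom.mapMatrix_apply]
    exact trace_map_ringHom (algebraMap ℚ L) (M ^ s)
  have hs2 : A.trace = algebraMap ℚ L M.trace := by
    rw [hA, hφ, RingHom.mapMatrix_apply]
    exact trace_map_ringHom (algebraMap ℚ L) M
  apply (algebraMap ℚ L).injective
  rw [← hs1, ← hs2, hkey]

open scoped Classical


open scoped Classical in
lemma conj_sum_eq {G : Type*} [Group G] [Fintype G] (v : MonoidAlgebra ℤ G) (y : G) :
    ∑ g : G, v.coeff (g * y * g⁻¹)
      = (((Finset.univ : Finset G).filter fun g : G => g * y * g⁻¹ = y).card : ℤ)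
          * partialAug y v := by
  have hsum := Finset.sum_comp (s := (Finset.univ : Finset G)) (fun h : G => v.coeff h)
    (fun g : G => g * y * g⁻¹)
  rw [hsum]
  have himg : (Finset.univ : Finset G).image (fun g => g * y * g⁻¹)
      = Finset.univ.filter (fun h => IsConj y h) := by
    ext h
    simp only [Finset.mem_image, Finset.mem_univ, true_and, Finset.mem_filter, isConj_iff]
  rw [himg]
  have hcard : ∀ h ∈ Finset.univ.filter (fun h => IsConj y h),
      ((Finset.univ : Finset G).filter fun g : G => g * y * g⁻¹ = h).card
        = ((Finset.univ : Finset G).filter fun g : G => g * y * g⁻¹ = y).card := by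
    intro h hh
    rw [Finset.mem_filter] at hh
    obtain ⟨g₀, hg₀⟩ := isConj_iff.1 hh.2
    refine Finset.card_bij' (fun a _ => g₀⁻¹ * a) (fun b _ => g₀ * b) ?_ ?_ ?_ ?_
    · intro a ha
      simp only [Finset.mem_filter, Finset.mem_univ, true_and] at ha ⊢
      have : g₀⁻¹ * a * y * (g₀⁻¹ * a)⁻¹ = g₀⁻¹ * (a * y * a⁻¹) * g₀ := by group
      rw [this, ha, ← hg₀]
      group
    · intro b hb
      simp only [Finset.mem_filter, Finset.mem_univ, true_and] at hb ⊢
      have : g₀ * b * y * (g₀ * b)⁻¹ = g₀ * (b * y * b⁻¹) * g₀⁻¹ := by group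
      rw [this, hb, hg₀]
    · intro a _; group
    · intro b _; group
  rw [Finset.sum_congr rfl fun h hh => by rw [hcard h hh]]
  have hpa : partialAug y v = ∑ h ∈ Finset.univ.filter (fun h => IsConj y h), v.coeff h := by
    rw [partialAug, Finset.sum_filter]
  rw [hpa, Finset.mul_sum]
  exact Finset.sum_congr rfl fun h _ => by rw [nsmul_eq_mul]

open scoped Classical in
lemma trace_pow_int {G : Type*} [Fintype G] {n s : ℕ} (hn : 0 < n) (hs : Nat.Coprime s n)
    (M : Matrix G G ℤ) (hM : M ^ n = 1) : (M ^ s).trace = M.trace := by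
  have hQ : ((Int.castRingHom ℚ).mapMatrix M) ^ n = 1 := by
    rw [← map_pow, hM, map_one]
  have := trace_pow_coprime hn hs ((Int.castRingHom ℚ).mapMatrix M) hQ
  rw [← map_pow, RingHom.mapMatrix_apply, RingHom.mapMatrix_apply,
    trace_map_ringHom, trace_map_ringHom] at this
  have h2 : ((M ^ s).trace : ℚ) = (M.trace : ℚ) := this
  exact_mod_cast h2

/-- For a torsion unit `u ∈ V(ℤG)` of order `n` and `s` coprime to `n` with
`s * t ≡ 1 (mod n)`, the partial augmentations satisfy
`ε_x(u^s) = ε_{x^t}(u)` for all `x ∈ G` of order dividing `n`. -/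
theorem stmt5 {G : Type*} [Group G] [Fintype G] (u : (MonoidAlgebra ℤ G)ˣ)
    (hu : u ∈ V G) {n : ℕ} (hn : orderOf u = n)
    (s t : ℕ) (hs : Nat.Coprime s n) (hst : s * t ≡ 1 [MOD n])
    (x : G) (hx : orderOf x ∣ n) :
    partialAug x ((u ^ s : (MonoidAlgebra ℤ G)ˣ) : MonoidAlgebra ℤ G)
      = partialAug (x ^ t) (u : MonoidAlgebra ℤ G) := by
  classical
  rcases Nat.eq_zero_or_pos n with hn0 | hnpos
  · subst hn0
    have hs1 : s = 1 := Nat.coprime_zero_right s |>.mp hs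
    have hst1 : s * t = 1 := by simpa [Nat.ModEq, Nat.mod_zero] using hst
    have ht1 : t = 1 := Nat.eq_one_of_mul_eq_one_left hst1
    subst hs1; subst ht1
    simp
  · set y : G := x ^ t with hy
    have hxn : x ^ n = 1 := orderOf_dvd_iff_pow_eq_one.mp hx
    have hyx : y ^ s = x := by
      rw [hy, ← pow_mul]
      have hst' : t * s ≡ 1 [MOD n] := by rwa [Nat.mul_comm] at hst
      have h1 : x ^ (t * s) = x ^ 1 := by
        rw [pow_eq_pow_iff_modEq]
        exact Nat.ModEq.of_dvd hx hst'
      simpa using h1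
    have hyn : y ^ n = 1 := by rw [hy, ← pow_mul, Nat.mul_comm, pow_mul, hxn, one_pow]
    have hun : (u : MonoidAlgebra ℤ G) ^ n = 1 := by
      have h1 : u ^ n = 1 := by rw [← hn]; exact pow_orderOf_eq_one u
      rw [← Units.val_pow_eq_pow_val, h1, Units.val_one]
    set w : MonoidAlgebra ℤ G := MonoidAlgebra.single (y⁻¹) (1 : ℤ) with hw
    set E : MonoidAlgebra ℤ G →ₗ[ℤ] MonoidAlgebra ℤ G :=
      (LinearMap.mulRight ℤ w).comp (LinearMap.mulLeft ℤ ((u : MonoidAlgebra ℤ G))) with hE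
    have hEpow : ∀ (k : ℕ) (a : MonoidAlgebra ℤ G),
        (E ^ k) a = (u : MonoidAlgebra ℤ G) ^ k * a * w ^ k := by
      intro k
      induction k with
      | zero => intro a; simp
      | succ k ih =>
        intro a
        rw [pow_succ, Module.End.mul_apply, ih]
        have hEa : E a = (u : MonoidAlgebra ℤ G) * a * w := rfl
        rw [hEa, pow_succ, pow_succ']
        simp only [mul_assoc]
    have hwpow : ∀ k : ℕ, w ^ k = MonoidAlgebra.single ((y ^ k)⁻¹) (1 : ℤ) := by
      intro k
      rw [hw, MonoidAlgebra.single_pow, one_pow, inv_pow]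
    set b : Module.Basis G ℤ (MonoidAlgebra ℤ G) :=
      Finsupp.basisSingleOne.map (MonoidAlgebra.coeffLinearEquiv ℤ).symm with hb
    set Mat : Matrix G G ℤ := LinearMap.toMatrixAlgEquiv b E with hMat
    have htr : ∀ k : ℕ, (Mat ^ k).trace
        = ∑ g : G, ((u : MonoidAlgebra ℤ G) ^ k).coeff (g * y ^ k * g⁻¹) := by
      intro k
      rw [hMat, ← map_pow]
      rw [Matrix.trace]
      refine Finset.sum_congr rfl fun g _ => ?_
      rw [Matrix.diag]
      rw [LinearMap.toMatrixAlgEquiv_apply]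
      have hbg : b g = MonoidAlgebra.single g (1 : ℤ) := by
        rw [hb]; rfl
      have hrepr : ∀ z : MonoidAlgebra ℤ G, b.repr z = z.coeff := by
        intro z; rw [hb]; rfl
      rw [hbg, hrepr, hEpow k, hwpow k,
        MonoidAlgebra.coeff_mul_single_apply, inv_inv, MonoidAlgebra.coeff_mul_single_apply]
      simp [mul_one]
    have hMatn : Mat ^ n = 1 := by
      rw [hMat, ← map_pow]
      have hEn : E ^ n = 1 := by
        apply LinearMap.ext
        intro a
        rw [hEpow n, hun, hwpow n, hyn, inv_one, one_mul, Module.End.one_apply]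
        rw [← MonoidAlgebra.one_def, mul_one]
      rw [hEn, map_one]
    have hkey := trace_pow_int hnpos hs Mat hMatn
    rw [htr s] at hkey
    have htr1 : Mat.trace = ∑ g : G, (u : MonoidAlgebra ℤ G).coeff (g * y * g⁻¹) := by
      have h5 := htr 1
      simpa using h5
    rw [htr1] at hkey
    have hus : ((u ^ s : (MonoidAlgebra ℤ G)ˣ) : MonoidAlgebra ℤ G)
        = (u : MonoidAlgebra ℤ G) ^ s := Units.val_pow_eq_pow_val u s
    rw [hyx] at hkey
    rw [← hus] at hkey
    rw [conj_sum_eq, conj_sum_eq] at hkey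
    have hcent : ((Finset.univ : Finset G).filter fun g : G => g * x * g⁻¹ = x)
        = ((Finset.univ : Finset G).filter fun g : G => g * y * g⁻¹ = y) := by
      ext g
      simp only [Finset.mem_filter, Finset.mem_univ, true_and]
      constructor
      · intro h
        rw [hy, ← conj_pow, h]
      · intro h
        have h2 : (g * y * g⁻¹) ^ s = y ^ s := by rw [h]
        rwa [conj_pow, hyx] at h2
    rw [hcent] at hkey
    have hpos : (0 : ℤ) < (((Finset.univ : Finset G).filter
        fun g : G => g * y * g⁻¹ = y).card : ℤ) := by
      have h1 : (1 : G) ∈ (Finset.univ : Finset G).filter fun g : G => g * y * g⁻¹ = y := by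
        simp
      have := Finset.card_pos.mpr ⟨1, h1⟩
      exact_mod_cast this
    exact mul_left_cancel₀ (ne_of_gt hpos) hkey
end

section
/- Let G be a finite group and u a torsion unit in V(ZG) of order n. Then for every x in G whose order divides n, Σ_{s ∈ (Z/nZ)^×} ε_x(u^s) = Σ_{s ∈ (Z/nZ)^×} ε_{x^s}(u). -/
open scoped Classical

section Aux

variable {G : Type*} [Group G] [Fintype G]

/-- Coefficient formula for products in the group algebra. -/
lemma PA.mulApply (f g : MonoidAlgebra ℤ G) (z : G) :
    (f * g).coeff z = ∑ m : G, f.coeff (z * m⁻¹) * g.coeff m := by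
  classical
  rw [MonoidAlgebra.mul_apply_antidiagonal f g z
    (Finset.univ.map ⟨fun m => (z * m⁻¹, m), 
      Function.LeftInverse.injective (g := Prod.snd) (fun _ => rfl)⟩) ?_]
  · simp [Finset.sum_map, Function.Embedding.coeFn_mk]
  · intro p
    simp only [Finset.mem_map, Finset.mem_univ, Function.Embedding.coeFn_mk, true_and]
    constructor
    · rintro ⟨m, rfl⟩; simp
    · intro hp
      exact ⟨p.2, by rw [← hp]; simp⟩

/-- the matrix of `v ↦ w * v * g` on `ℤG` in the standard basis. -/
noncomputable def PA.Bmat (w : MonoidAlgebra ℤ G) (g : G) : Matrix G G ℤ :=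
  fun h k => w.coeff (h * g * k⁻¹)

lemma PA.Bmat_mul (w w' : MonoidAlgebra ℤ G) (g g' : G) :
    PA.Bmat w g * PA.Bmat w' g' = PA.Bmat (w * w') (g * g') := by
  ext h k
  rw [Matrix.mul_apply]
  show ∑ m : G, w.coeff (h * g * m⁻¹) * w'.coeff (m * g' * k⁻¹) = _
  show _ = (w * w').coeff (h * (g * g') * k⁻¹)
  rw [PA.mulApply]
  refine Fintype.sum_equiv (Equiv.mulRight (g' * k⁻¹)) _ _ fun m => ?_
  simp only [Equiv.coe_mulRight]
  congr 1
  · congr 1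
    group
  · congr 1
    group

lemma PA.Bmat_one : PA.Bmat (1 : MonoidAlgebra ℤ G) 1 = 1 := by
  ext h k
  show (1 : MonoidAlgebra ℤ G).coeff (h * 1 * k⁻¹) = _
  rw [MonoidAlgebra.one_def, MonoidAlgebra.coeff_single, Finsupp.single_apply, Matrix.one_apply]
  by_cases hhk : h = k
  · subst hhk; simp
  · rw [if_neg hhk, if_neg]
    intro hc
    rw [mul_one] at hc
    exact hhk (by rw [← mul_inv_eq_one, ← hc])

lemma PA.Bmat_pow (w : MonoidAlgebra ℤ G) (g : G) (m : ℕ) :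
    PA.Bmat w g ^ m = PA.Bmat (w ^ m) (g ^ m) := by
  induction m with
  | zero => simpa using PA.Bmat_one.symm
  | succ k ih => rw [pow_succ, pow_succ, pow_succ, ih, PA.Bmat_mul]

/-- The size of the "centralizer-type" set used below. -/
noncomputable def PA.N (g : G) : ℕ :=
  (Finset.univ.filter (fun c : G => c * g * c⁻¹ = g)).card

lemma PA.N_pos (g : G) : 0 < PA.N g := by
  rw [PA.N, Finset.card_pos]
  exact ⟨1, by simp⟩

lemma PA.trace_Bmat (w : MonoidAlgebra ℤ G) (g : G) :
    (PA.Bmat w g).trace = (PA.N g : ℤ) * partialAug g w := by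
  classical
  have h1 : (PA.Bmat w g).trace = ∑ h : G, w.coeff (h * g * h⁻¹) := by
    simp [Matrix.trace, Matrix.diag, PA.Bmat]
  rw [h1, partialAug, Finset.mul_sum]
  have h2 : ∀ h : G, w.coeff (h * g * h⁻¹) = ∑ k : G, if h * g * h⁻¹ = k then w.coeff k else 0 := by
    intro h; simp
  simp_rw [h2]
  rw [Finset.sum_comm]
  refine Finset.sum_congr rfl fun k _ => ?_
  have h3 : ∑ h : G, (if h * g * h⁻¹ = k then w.coeff k else 0)
      = ((Finset.univ.filter fun h : G => h * g * h⁻¹ = k).card : ℤ) * w.coeff k := by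
    rw [← Finset.sum_filter, Finset.sum_const, nsmul_eq_mul]
  rw [h3]
  by_cases hconj : IsConj g k
  · rw [if_pos hconj]
    obtain ⟨c₀, hc₀⟩ := isConj_iff.mp hconj
    congr 2
    refine Finset.card_bij' (fun h _ => c₀⁻¹ * h) (fun c _ => c₀ * c) ?_ ?_ ?_ ?_
    · intro h hh
      simp only [Finset.mem_filter, Finset.mem_univ, true_and] at hh ⊢
      have e : h * g * h⁻¹ = c₀ * g * c₀⁻¹ := by rw [hh, hc₀]
      calc (c₀⁻¹ * h) * g * (c₀⁻¹ * h)⁻¹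
          = c₀⁻¹ * (h * g * h⁻¹) * c₀ := by group
        _ = c₀⁻¹ * (c₀ * g * c₀⁻¹) * c₀ := by rw [e]
        _ = g := by group
    · intro c hc
      simp only [Finset.mem_filter, Finset.mem_univ, true_and] at hc ⊢
      calc (c₀ * c) * g * (c₀ * c)⁻¹ = c₀ * (c * g * c⁻¹) * c₀⁻¹ := by group
        _ = k := by rw [hc, hc₀]
    · intro h _; group
    · intro c _; group
  · rw [if_neg hconj, mul_zero]
    convert zero_mul (w.coeff k)
    norm_cast
    rw [Finset.card_eq_zero, Finset.filter_eq_empty_iff]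
    intro h _ hh
    exact hconj (isConj_iff.mpr ⟨h, hh⟩)

/-- Trace rigidity: an integer matrix of finite order `n` has `tr (M^s) = tr M`
for `s` coprime to `n`. -/
lemma PA.trace_pow_eq {n : ℕ} (hn : 0 < n) (M : Matrix G G ℤ) (hM : M ^ n = 1)
    {s : ℕ} (hs : Nat.Coprime s n) : (M ^ s).trace = M.trace := by
  classical
  have hpowmod : ∀ k : ℕ, M ^ k = M ^ (k % n) := by
    intro k
    conv_lhs => rw [← Nat.div_add_mod k n]
    rw [pow_add, pow_mul, hM, one_pow, one_mul]
  set C : ℕ := Finset.sup (Finset.range n) (fun j => (M ^ j).trace.natAbs) with hC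
  have hb : ∀ k : ℕ, (M ^ k).trace.natAbs ≤ C := by
    intro k
    rw [hpowmod k, hC]
    exact Finset.le_sup (f := fun j => (M ^ j).trace.natAbs)
      (Finset.mem_range.mpr (Nat.mod_lt _ hn))
  haveI : NeZero n := ⟨hn.ne'⟩
  have hunit : IsUnit ((s : ZMod n)) := (ZMod.isUnit_iff_coprime s n).mpr hs
  obtain ⟨p, hp_gt, hp_prime, hp_mod⟩ := Nat.forall_exists_prime_gt_and_eq_mod hunit (2 * C)
  haveI : Fact p.Prime := ⟨hp_prime⟩
  have hps : M ^ p = M ^ s := by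
    have hmod : p % n = s % n := by
      have := congrArg ZMod.val hp_mod
      rwa [ZMod.val_natCast, ZMod.val_natCast] at this
    rw [hpowmod p, hpowmod s, hmod]
  -- the Frobenius congruence mod p
  have hcong : (p : ℤ) ∣ (M ^ p).trace - M.trace := by
    set φ : Matrix G G ℤ →+* Matrix G G (ZMod p) := (Int.castRingHom (ZMod p)).mapMatrix with hφ
    have h1 : (φ M) ^ p = φ (M ^ p) := (map_pow φ M p).symm
    have h2 : ((M ^ p).trace : ZMod p) = ((M.trace : ZMod p)) := by
      have h3 : Matrix.trace (φ (M ^ p)) = Matrix.trace (φ M) ^ p := by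
        rw [← h1, ZMod.trace_pow_card]
      have h4 : ∀ A : Matrix G G ℤ, Matrix.trace (φ A) = ((A.trace : ℤ) : ZMod p) := by
        intro A
        simp [Matrix.trace, φ, Matrix.diag]
      rw [h4, h4] at h3
      rw [h3, ZMod.pow_card]
    have := (ZMod.intCast_eq_intCast_iff' _ _ _).mp h2
    exact Int.ModEq.dvd this.symm
  rw [hps] at hcong
  have habs : |(M ^ s).trace - M.trace| < (p : ℤ) := by
    have b1 : (M ^ s).trace.natAbs ≤ C := hb s
    have b2 : M.trace.natAbs ≤ C := by have := hb 1; rwa [pow_one] at this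
    have : |(M ^ s).trace - M.trace| ≤ |(M ^ s).trace| + |M.trace| := abs_sub _ _
    refine lt_of_le_of_lt this ?_
    rw [Int.abs_eq_natAbs, Int.abs_eq_natAbs]
    have : ((M ^ s).trace.natAbs : ℤ) + (M.trace.natAbs : ℤ) ≤ (C : ℤ) + (C : ℤ) := by
      exact_mod_cast add_le_add b1 b2
    refine lt_of_le_of_lt this ?_
    exact_mod_cast by omega
  have := Int.eq_zero_of_abs_lt_dvd hcong habs
  omega

end Aux

/-- For a torsion unit `u ∈ V(ℤG)` of order `n` and `x ∈ G` of order dividing `n`,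
`Σ_{s ∈ (ℤ/nℤ)ˣ} ε_x(u^s) = Σ_{s ∈ (ℤ/nℤ)ˣ} ε_{x^s}(u)`. -/
theorem stmt6 {G : Type*} [Group G] [Fintype G] (u : (MonoidAlgebra ℤ G)ˣ)
    (hu : u ∈ V G) (htor : IsOfFinOrder u) {n : ℕ} (hn : orderOf u = n)
    (x : G) (hx : orderOf x ∣ n) :
    ∑ s ∈ (Finset.range n).filter (fun s => Nat.Coprime s n),
        partialAug x ((u ^ s : (MonoidAlgebra ℤ G)ˣ) : MonoidAlgebra ℤ G)
      = ∑ s ∈ (Finset.range n).filter (fun s => Nat.Coprime s n),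
          partialAug (x ^ s) (u : MonoidAlgebra ℤ G) := by
  classical
  have hn0 : 0 < n := hn ▸ htor.orderOf_pos
  haveI : NeZero n := ⟨hn0.ne'⟩
  have hun : (u : MonoidAlgebra ℤ G) ^ n = 1 := by
    have h : u ^ n = 1 := by rw [← hn]; exact pow_orderOf_eq_one u
    calc (u : MonoidAlgebra ℤ G) ^ n = ((u ^ n : (MonoidAlgebra ℤ G)ˣ) : MonoidAlgebra ℤ G) := by
          rw [Units.val_pow_eq_pow_val]
      _ = 1 := by rw [h]; rfl
  have hxn : x ^ n = 1 := orderOf_dvd_iff_pow_eq_one.mp hx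
  -- the inverse map mod n
  set t : ℕ → ℕ := fun s => ((s : ZMod n)⁻¹).val with ht
  set S := (Finset.range n).filter (fun s => Nat.Coprime s n) with hS
  have hmemS : ∀ {s : ℕ}, s ∈ S ↔ s < n ∧ Nat.Coprime s n := by
    intro s; simp [hS, Finset.mem_filter, Finset.mem_range]
  have hcast_t : ∀ s : ℕ, ((t s : ℕ) : ZMod n) = (s : ZMod n)⁻¹ := by
    intro s
    exact ZMod.natCast_rightInverse _
  have htmem : ∀ s ∈ S, t s ∈ S := by
    intro s hsS
    obtain ⟨hslt, hscop⟩ := hmemS.mp hsS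
    refine hmemS.mpr ⟨ZMod.val_lt _, ?_⟩
    have hu1 : IsUnit ((s : ZMod n)) := (ZMod.isUnit_iff_coprime s n).mpr hscop
    have hu' : IsUnit ((t s : ℕ) : ZMod n) := by
      rw [hcast_t, ← hu1.unit_spec, ZMod.inv_coe_unit]
      exact (hu1.unit⁻¹).isUnit
    exact (ZMod.isUnit_iff_coprime _ n).mp hu'
  have hmul : ∀ s ∈ S, (s * t s) ≡ 1 [MOD n] := by
    intro s hsS
    obtain ⟨hslt, hscop⟩ := hmemS.mp hsS
    have : ((s * t s : ℕ) : ZMod n) = ((1 : ℕ) : ZMod n) := by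
      push_cast
      rw [hcast_t, ZMod.coe_mul_inv_eq_one s hscop]
    exact (ZMod.natCast_eq_natCast_iff _ _ _).mp this
  have htt : ∀ s ∈ S, t (t s) = s := by
    intro s hsS
    obtain ⟨hslt, hscop⟩ := hmemS.mp hsS
    have hu1 : IsUnit ((s : ZMod n)) := (ZMod.isUnit_iff_coprime s n).mpr hscop
    have key : ((s : ZMod n)⁻¹)⁻¹ = (s : ZMod n) := by
      rw [← hu1.unit_spec, ZMod.inv_coe_unit, ZMod.inv_coe_unit, inv_inv]
    have : t (t s) = ((s : ZMod n)).val := by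
      show ((t s : ℕ) : ZMod n)⁻¹.val = _
      rw [hcast_t, key]
    rw [this, ZMod.val_natCast, Nat.mod_eq_of_lt hslt]
  -- per-term identity
  have hterm : ∀ s ∈ S,
      partialAug x ((u ^ s : (MonoidAlgebra ℤ G)ˣ) : MonoidAlgebra ℤ G)
        = partialAug (x ^ (t s)) (u : MonoidAlgebra ℤ G) := by
    intro s hsS
    obtain ⟨hslt, hscop⟩ := hmemS.mp hsS
    have hst : s * t s ≡ 1 [MOD n] := hmul s hsS
    have hxst : x ^ (s * t s) = x := by
      have : s * t s ≡ 1 [MOD orderOf x] := hst.of_dvd hx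
      have := pow_eq_pow_iff_modEq.mpr this
      simpa using this
    set M := PA.Bmat (u : MonoidAlgebra ℤ G) (x ^ (t s)) with hM
    have hMn : M ^ n = 1 := by
      rw [hM, PA.Bmat_pow, hun, ← pow_mul, mul_comm, pow_mul, hxn, one_pow, PA.Bmat_one]
    have hMs : M ^ s = PA.Bmat ((u : MonoidAlgebra ℤ G) ^ s) x := by
      rw [hM, PA.Bmat_pow, ← pow_mul, mul_comm, hxst]
    have htr := PA.trace_pow_eq hn0 M hMn hscop
    rw [hMs, hM, PA.trace_Bmat, PA.trace_Bmat] at htr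
    -- N x = N (x ^ t s)
    have hNeq : PA.N (x ^ (t s)) = PA.N x := by
      unfold PA.N
      congr 1
      apply Finset.filter_congr
      intro c _
      constructor
      · intro hc
        calc c * x * c⁻¹ = (c * (x ^ (t s)) * c⁻¹) ^ s := by
              rw [conj_pow, ← pow_mul, mul_comm (t s) s, hxst]
          _ = (x ^ (t s)) ^ s := by rw [hc]
          _ = x := by rw [← pow_mul, mul_comm (t s) s, hxst]
      · intro hc
        calc c * x ^ (t s) * c⁻¹ = (c * x * c⁻¹) ^ (t s) := conj_pow.symm
          _ = x ^ (t s) := by rw [hc]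
    rw [hNeq] at htr
    have hNne : ((PA.N x : ℤ)) ≠ 0 := by
      exact_mod_cast (PA.N_pos x).ne'
    have := mul_left_cancel₀ hNne htr
    rw [← this, Units.val_pow_eq_pow_val]
  -- reindex the sum
  refine Finset.sum_nbij' (i := t) (j := t) htmem htmem htt htt ?_
  intro s hsS
  exact hterm s hsS
end

section
/- Let G be a finite group with a cyclic Sylow p-subgroup P, let x ∈ P have order p, and N = N_G(⟨x⟩). Let χ be the character of G induced from the trivial character of P. Then χ(1) + (p+1) Σ_{i=1}^{p-1} χ(x^i) = |G:P| + |N:P|(p^2 − 1). -/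
open scoped Classical

/-- In a cyclic group `P` (here a Sylow subgroup), any element of order `p`
lies in the subgroup generated by any fixed element `x` of order `p`. -/
lemma aux_mem_zpowers {G : Type*} [Group G] [Fintype G] {p : ℕ} [hp : Fact p.Prime]
    (P : Sylow p G) (hP : IsCyclic P) {x y : G} (hxP : x ∈ P) (hx : orderOf x = p)
    (hyP : y ∈ P) (hy : orderOf y = p) : y ∈ Subgroup.zpowers x := by
  set x' : (P : Subgroup G) := ⟨x, hxP⟩ with hx'
  set y' : (P : Subgroup G) := ⟨y, hyP⟩ with hy'
  have hox : orderOf x' = p := by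
    have h1 : orderOf x = orderOf x' :=
      (orderOf_injective (P : Subgroup G).subtype Subtype.coe_injective x')
    exact h1.symm.trans hx
  have hoy : orderOf y' = p := by
    have h1 : orderOf y = orderOf y' :=
      (orderOf_injective (P : Subgroup G).subtype Subtype.coe_injective y')
    exact h1.symm.trans hy
  have hxp1 : x' ^ p = 1 := orderOf_dvd_iff_pow_eq_one.mp (dvd_of_eq hox)
  have hyp1 : y' ^ p = 1 := orderOf_dvd_iff_pow_eq_one.mp (dvd_of_eq hoy)
  have key : y' ∈ Subgroup.zpowers x' := by
    by_contra hmem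
    have hS := hP.card_pow_eq_one_le (α := (P : Subgroup G)) hp.out.pos
    set S : Finset (P : Subgroup G) := Finset.univ.filter fun a => a ^ p = 1 with hSdef
    have hTsub : ((Subgroup.zpowers x' : Subgroup (P : Subgroup G)) : Set (P : Subgroup G)).toFinset ⊆ S := by
      intro a ha
      rw [Set.mem_toFinset] at ha
      obtain ⟨k, rfl⟩ := ha
      simp only [hSdef, Finset.mem_filter, Finset.mem_univ, true_and]
      rw [← zpow_natCast (x' ^ k), ← zpow_mul, mul_comm, zpow_mul, zpow_natCast, hxp1, one_zpow]
    have hTcard : ((Subgroup.zpowers x' : Subgroup (P : Subgroup G)) : Set (P : Subgroup G)).toFinset.card = p := by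
      rw [Set.toFinset_card, ← Nat.card_eq_fintype_card]
      exact (Nat.card_zpowers x').trans hox
    have hyS : y' ∈ S := by
      simp only [hSdef, Finset.mem_filter, Finset.mem_univ, true_and]
      exact hyp1
    have hynotT : y' ∉ ((Subgroup.zpowers x' : Subgroup (P : Subgroup G)) : Set (P : Subgroup G)).toFinset := by
      rw [Set.mem_toFinset]; exact hmem
    have : p + 1 ≤ S.card := by
      calc p + 1 = (insert y' ((Subgroup.zpowers x' : Subgroup (P : Subgroup G)) : Set (P : Subgroup G)).toFinset).card := by
            rw [Finset.card_insert_of_notMem hynotT, hTcard]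
        _ ≤ S.card := Finset.card_le_card (Finset.insert_subset hyS hTsub)
    omega
  obtain ⟨k, hk⟩ := key
  exact ⟨k, by simpa using congrArg (Subtype.val) hk⟩

/-- Rank formula for the character induced from the trivial character of a cyclic
Sylow `p`-subgroup `P`: with `x ∈ P` of order `p` and `N = N_G(⟨x⟩)`,
`χ(1) + (p+1) Σ_{i=1}^{p-1} χ(xⁱ) = |G:P| + |N:P| (p² - 1)`. -/
theorem stmt9 {G : Type*} [Group G] [Fintype G] {p : ℕ} [Fact p.Prime]
    (P : Sylow p G) (hP : IsCyclic P) (x : G) (hxP : x ∈ P) (hx : orderOf x = p) :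
    let N : Subgroup G := Subgroup.normalizer (Subgroup.zpowers x)
    -- the induced character `Ind_P^G 1`, given by the standard induction formula
    let χ : G → ℚ := fun g =>
      (((Finset.univ.filter (fun h : G => h * g * h⁻¹ ∈ (P : Subgroup G))).card : ℚ)) /
        (Nat.card (P : Subgroup G) : ℚ)
    χ 1 + ((p : ℚ) + 1) * ∑ i ∈ Finset.Icc 1 (p - 1), χ (x ^ i)
      = ((P : Subgroup G).index : ℚ)
        + (((P : Subgroup G).subgroupOf N).index : ℚ) * ((p : ℚ) ^ 2 - 1) := by
  intro N χ
  have hp : p.Prime := Fact.out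
  -- key equivalence: for i with 0 < i, ¬ p ∣ i:  h x^i h⁻¹ ∈ P ↔ h ∈ N
  have key : ∀ i : ℕ, i ≠ 0 → ¬ p ∣ i → ∀ h : G,
      (h * x ^ i * h⁻¹ ∈ (P : Subgroup G) ↔ h ∈ N) := by
    intro i hi0 hpi h
    have hcop : Nat.Coprime p i := (hp.coprime_iff_not_dvd).mpr hpi
    have hoi : orderOf (x ^ i) = p := by
      rw [orderOf_pow' x hi0, hx, Nat.Coprime.gcd_eq_one hcop, Nat.div_one]
    constructor
    · intro hmem
      have hconj : orderOf (h * x ^ i * h⁻¹) = p := by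
        have := orderOf_injective (MulAut.conj h).toMonoidHom (MulEquiv.injective _) (x ^ i)
        simpa [MulAut.conj_apply, hoi] using this
      have hz : h * x ^ i * h⁻¹ ∈ Subgroup.zpowers x :=
        aux_mem_zpowers P hP hxP hx hmem hconj
      -- get m with (x^i)^m = x
      obtain ⟨m, hm⟩ := exists_pow_eq_self_of_coprime (x := x) (n := i)
        (by rw [hx]; exact hcop.symm)
      have hxz : h * x * h⁻¹ ∈ Subgroup.zpowers x := by
        have : h * x * h⁻¹ = (h * x ^ i * h⁻¹) ^ m := by
          rw [conj_pow, hm]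
        rw [this]
        exact pow_mem hz m
      apply Subgroup.mem_normalizer_fintype
      intro n hn
      obtain ⟨k, rfl⟩ := hn
      have : h * x ^ k * h⁻¹ = (h * x * h⁻¹) ^ k := (conj_zpow ..).symm
      rw [this]
      exact zpow_mem hxz k
    · intro hmem
      have hxz : h * x * h⁻¹ ∈ Subgroup.zpowers x :=
        (Subgroup.mem_normalizer_iff.mp hmem x).mp (Subgroup.mem_zpowers x)
      have : h * x ^ i * h⁻¹ = (h * x * h⁻¹) ^ i := (conj_pow ..).symm
      rw [this]
      exact Subgroup.zpowers_le.mpr hxP (pow_mem hxz i)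
  have hPN : (P : Subgroup G) ≤ N := by
    intro h hh
    exact (key 1 one_ne_zero (by simpa using hp.one_lt.ne') h).mp
      (by simpa using mul_mem (mul_mem hh hxP) (inv_mem hh))
  have hPpos : (0 : ℚ) < (Nat.card (P : Subgroup G) : ℚ) := by
    exact_mod_cast Nat.card_pos
  have hPne : (Nat.card (P : Subgroup G) : ℚ) ≠ 0 := ne_of_gt hPpos
  -- χ(1)
  have hχ1 : χ 1 = (Fintype.card G : ℚ) / (Nat.card (P : Subgroup G) : ℚ) := by
    show ((Finset.univ.filter (fun h : G => h * 1 * h⁻¹ ∈ (P : Subgroup G))).card : ℚ) / _ = _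
    congr 2
    rw [Finset.filter_true_of_mem, Finset.card_univ]
    intro h _
    simpa using (P : Subgroup G).one_mem
  -- χ(x^i)
  have hχi : ∀ i ∈ Finset.Icc 1 (p - 1),
      χ (x ^ i) = (Nat.card N : ℚ) / (Nat.card (P : Subgroup G) : ℚ) := by
    intro i hi
    rw [Finset.mem_Icc] at hi
    have hi0 : i ≠ 0 := by omega
    have hip : ¬ p ∣ i := by
      intro hdvd
      have := Nat.le_of_dvd (by omega) hdvd
      have := hp.one_lt
      omega
    show ((Finset.univ.filter (fun h : G => h * x ^ i * h⁻¹ ∈ (P : Subgroup G))).card : ℚ) / _ = _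
    congr 2
    have heq : (Finset.univ.filter fun h : G => h * x ^ i * h⁻¹ ∈ (P : Subgroup G))
        = Finset.univ.filter fun h : G => h ∈ N :=
      Finset.filter_congr fun h _ => key i hi0 hip h
    rw [heq, Nat.card_eq_fintype_card, Fintype.card_subtype]
  have hsum : ∑ i ∈ Finset.Icc 1 (p - 1), χ (x ^ i)
      = ((p : ℚ) - 1) * ((Nat.card N : ℚ) / (Nat.card (P : Subgroup G) : ℚ)) := by
    rw [Finset.sum_congr rfl hχi, Finset.sum_const, Nat.card_Icc]
    have : ((p - 1 + 1 - 1 : ℕ) : ℚ) = (p : ℚ) - 1 := by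
      rw [show p - 1 + 1 - 1 = p - 1 from rfl, Nat.cast_sub hp.one_lt.le, Nat.cast_one]
    rw [nsmul_eq_mul, this]
  -- index identities
  have hidx1 : ((P : Subgroup G).index : ℚ)
      = (Fintype.card G : ℚ) / (Nat.card (P : Subgroup G) : ℚ) := by
    rw [eq_div_iff hPne, mul_comm]
    exact_mod_cast congrArg (Nat.cast : ℕ → ℚ)
      ((Subgroup.card_mul_index (P : Subgroup G)).trans Nat.card_eq_fintype_card)
  have hidx2 : (((P : Subgroup G).subgroupOf N).index : ℚ)
      = (Nat.card N : ℚ) / (Nat.card (P : Subgroup G) : ℚ) := by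
    have hc : Nat.card ((P : Subgroup G).subgroupOf N) = Nat.card (P : Subgroup G) :=
      Nat.card_congr (Subgroup.subgroupOfEquivOfLe hPN).toEquiv
    have := Subgroup.card_mul_index ((P : Subgroup G).subgroupOf N)
    rw [hc] at this
    rw [eq_div_iff hPne, mul_comm]
    exact_mod_cast congrArg (Nat.cast : ℕ → ℚ) this
  rw [hχ1, hsum, hidx1, hidx2]
  ring
end

section
/- Let G be a finite group with a cyclic Sylow p-subgroup P, let x ∈ P have order p, and N = N_G(⟨x⟩). Let λ be a faithful irreducible (one-dimensional) character of the cyclic group P and χ = Ind_P^G λ. Then χ(1) + (p+1) Σ_{i=1}^{p-1} χ(x^i) = |G:P| − |N:P|(p+1). -/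
open scoped Classical

open Subgroup

lemma aux_zpowers_eq {α : Type*} [Group α] [Fintype α] [IsCyclic α]
    {x y : α} (h : orderOf x = orderOf y) :
    Subgroup.zpowers x = Subgroup.zpowers y := by
  classical
  have hpos : 0 < orderOf x := orderOf_pos x
  have key : ∀ z : α, orderOf z = orderOf x →
      (Subgroup.zpowers z : Set α).toFinset
        = Finset.univ.filter (fun a : α => a ^ orderOf x = 1) := by
    intro z hz
    apply Finset.eq_of_subset_of_card_le
    · intro a ha
      simp only [Set.mem_toFinset, SetLike.mem_coe] at ha
      obtain ⟨k, rfl⟩ := Subgroup.mem_zpowers_iff.mp ha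
      simp only [Finset.mem_filter, Finset.mem_univ, true_and]
      rw [← zpow_natCast, ← zpow_mul, mul_comm, zpow_mul, zpow_natCast, ← hz,
        pow_orderOf_eq_one, one_zpow]
    · have hcard : (Subgroup.zpowers z : Set α).toFinset.card = orderOf x := by
        rw [Set.toFinset_card, ← hz]
        exact Fintype.card_zpowers
      rw [hcard]
      have := IsCyclic.card_pow_eq_one_le (α := α) hpos
      convert this using 2
  have h1 := key x rfl
  have h2 := key y h.symm
  have : (Subgroup.zpowers x : Set α) = (Subgroup.zpowers y : Set α) :=
    Set.toFinset_inj.mp (h1.trans h2.symm)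
  exact SetLike.coe_injective this

lemma aux_mem_normalizer {G : Type*} [Group G] [Fintype G] {p : ℕ} [Fact p.Prime]
    (P : Sylow p G) (hP : IsCyclic P) {x : G} (hxP : x ∈ P) (hx : orderOf x = p)
    {h : G} {i : ℕ} (hi : ¬ p ∣ i)
    (hmem : h * x ^ i * h⁻¹ ∈ (P : Subgroup G)) :
    h ∈ Subgroup.normalizer (Subgroup.zpowers x) := by
  classical
  have hp : p.Prime := Fact.out
  set y := h * x * h⁻¹ with hy
  have hyo : orderOf y = p := by
    have := orderOf_injective (MulAut.conj h).toMonoidHom (MulAut.conj h).injective x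
    simpa [hx] using this
  have hyi : y ^ i = h * x ^ i * h⁻¹ := conj_pow
  have hco : Nat.Coprime i p := Nat.coprime_comm.mp ((Nat.Prime.coprime_iff_not_dvd hp).mpr hi)
  set j := ((i : ZMod p)⁻¹).val with hj
  have hij : (i * j) % p = 1 % p := by
    have : ((i * j : ℕ) : ZMod p) = ((1 : ℕ) : ZMod p) := by
      push_cast
      rw [hj, ZMod.natCast_val, ZMod.cast_id]
      exact ZMod.coe_mul_inv_eq_one i hco
    exact (ZMod.natCast_eq_natCast_iff _ _ _).mp this
  have hyP : y ∈ (P : Subgroup G) := by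
    have hpow : y ^ (i * j) = y ^ 1 := pow_eq_pow_iff_modEq.mpr (by rw [hyo]; exact hij)
    have : y = (y ^ i) ^ j := by rw [← pow_mul, hpow, pow_one]
    rw [this, hyi]
    exact pow_mem hmem j
  have hx' : orderOf (⟨x, hxP⟩ : (P : Subgroup G)) = p :=
    ((orderOf_injective (P : Subgroup G).subtype Subtype.coe_injective ⟨x, hxP⟩).symm).trans hx
  have hy' : orderOf (⟨y, hyP⟩ : (P : Subgroup G)) = p :=
    ((orderOf_injective (P : Subgroup G).subtype Subtype.coe_injective ⟨y, hyP⟩).symm).trans hyo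
  have hz : Subgroup.zpowers (⟨y, hyP⟩ : (P : Subgroup G))
      = Subgroup.zpowers (⟨x, hxP⟩ : (P : Subgroup G)) :=
    aux_zpowers_eq (by rw [hy', hx'])
  have hzG : Subgroup.zpowers y = Subgroup.zpowers x := by
    have := congrArg (Subgroup.map (P : Subgroup G).subtype) hz
    rwa [MonoidHom.map_zpowers, MonoidHom.map_zpowers, Subgroup.coe_subtype] at this
  rw [Subgroup.mem_normalizer_iff]
  intro n
  constructor
  · intro hn
    obtain ⟨k, hk⟩ := Subgroup.mem_zpowers_iff.mp hn
    rw [← hzG]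
    exact Subgroup.mem_zpowers_iff.mpr ⟨k, by rw [← hk, conj_zpow]⟩
  · intro hn
    rw [← hzG] at hn
    obtain ⟨k, hk⟩ := Subgroup.mem_zpowers_iff.mp hn
    rw [conj_zpow] at hk
    exact Subgroup.mem_zpowers_iff.mpr ⟨k, mul_left_cancel (mul_right_cancel hk)⟩

lemma aux_le_normalizer {G : Type*} [Group G] {p : ℕ} [Fact p.Prime]
    (P : Sylow p G) (hP : IsCyclic P) {x : G} (hxP : x ∈ P) :
    (P : Subgroup G) ≤ Subgroup.normalizer (Subgroup.zpowers x) := by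
  have hcomm : ∀ a b : G, a ∈ P → b ∈ P → a * b = b * a := by
    intro a b ha hb
    letI : CommGroup ↥(P : Subgroup G) := IsCyclic.commGroup
    have := mul_comm (⟨a, ha⟩ : (P : Subgroup G)) ⟨b, hb⟩
    exact congrArg Subtype.val this
  have hle : Subgroup.zpowers x ≤ (P : Subgroup G) := Subgroup.zpowers_le.mpr hxP
  intro g hg
  rw [Subgroup.mem_normalizer_iff]
  intro n
  constructor
  · intro hn
    have : g * n * g⁻¹ = n := by
      rw [hcomm g n hg (hle hn)]
      group
    rwa [this]
  · intro hn
    have : g * n * g⁻¹ = n := by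
      rw [hcomm g n hg ?_]
      · group
      · have : n = g⁻¹ * (g * n * g⁻¹) * g := by group
        rw [this]
        exact Subgroup.mul_mem _ (Subgroup.mul_mem _ (Subgroup.inv_mem _ hg) (hle hn)) hg
    rwa [this] at hn

/-- Rank formula for the character induced from a faithful linear character `λ` of a
cyclic Sylow `p`-subgroup `P`: with `x ∈ P` of order `p` and `N = N_G(⟨x⟩)`,
`χ(1) + (p+1) Σ_{i=1}^{p-1} χ(xⁱ) = |G:P| - |N:P| (p + 1)`. -/
theorem stmt10 {G : Type*} [Group G] [Fintype G] {p : ℕ} [Fact p.Prime]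
    (P : Sylow p G) (hP : IsCyclic P) (x : G) (hxP : x ∈ P) (hx : orderOf x = p)
    (lam : (P : Subgroup G) →* ℂ) (hfaithful : Function.Injective lam) :
    let N : Subgroup G := Subgroup.normalizer (Subgroup.zpowers x)
    -- extension of `λ` to `G` by zero
    let lam0 : G → ℂ := fun g => if h : g ∈ (P : Subgroup G) then lam ⟨g, h⟩ else 0
    -- the induced character `Ind_P^G λ`, given by the standard induction formula
    let χ : G → ℂ := fun g =>
      (1 / (Nat.card (P : Subgroup G) : ℂ)) * ∑ h : G, lam0 (h * g * h⁻¹)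
    χ 1 + ((p : ℂ) + 1) * ∑ i ∈ Finset.Icc 1 (p - 1), χ (x ^ i)
      = ((P : Subgroup G).index : ℂ)
        - (((P : Subgroup G).subgroupOf N).index : ℂ) * ((p : ℂ) + 1) := by
  intro N lam0 χ
  classical
  have hp : p.Prime := Fact.out
  have hPN : (P : Subgroup G) ≤ N := aux_le_normalizer P hP hxP
  have hcP : (Nat.card (P : Subgroup G) : ℂ) ≠ 0 := by
    exact_mod_cast Nat.card_pos.ne'
  -- value at 1
  have hchi1 : χ 1 = ((P : Subgroup G).index : ℂ) := by
    have hlam1 : ∀ h : G, lam0 (h * 1 * h⁻¹) = 1 := by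
      intro h
      have h1 : h * 1 * h⁻¹ = 1 := by group
      rw [h1]
      simp only [lam0]
      rw [dif_pos (Subgroup.one_mem _)]
      have : (⟨1, Subgroup.one_mem _⟩ : (P : Subgroup G)) = 1 := rfl
      rw [this, map_one]
    simp only [χ]
    rw [Finset.sum_congr rfl (fun h _ => hlam1 h), Finset.sum_const, Finset.card_univ,
      nsmul_eq_mul, mul_one]
    have hcard : ((P : Subgroup G).index : ℂ) * ((Nat.card (P : Subgroup G) : ℂ))
        = (Fintype.card G : ℂ) := by
      rw [← Nat.cast_mul, Subgroup.index_mul_card, Nat.card_eq_fintype_card]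
    rw [one_div, inv_mul_eq_div, div_eq_iff hcP]
    exact hcard.symm
  -- inner sum over i for fixed h
  have hkey : ∀ h : G, (∑ i ∈ Finset.Icc 1 (p - 1), lam0 (h * x ^ i * h⁻¹))
      = if h ∈ N then (-1 : ℂ) else 0 := by
    intro h
    by_cases hN : h ∈ N
    · rw [if_pos hN]
      have hyx : h * x * h⁻¹ ∈ Subgroup.zpowers x :=
        (Subgroup.mem_normalizer_iff.mp hN x).mp (Subgroup.mem_zpowers x)
      have hyP : h * x * h⁻¹ ∈ (P : Subgroup G) := Subgroup.zpowers_le.mpr hxP hyx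
      set z : ℂ := lam ⟨h * x * h⁻¹, hyP⟩ with hzdef
      have hzp : z ^ p = 1 := by
        rw [hzdef, ← map_pow]
        have hone : (⟨h * x * h⁻¹, hyP⟩ : (P : Subgroup G)) ^ p = 1 := by
          apply Subtype.ext
          show (h * x * h⁻¹) ^ p = 1
          rw [conj_pow, ← hx, pow_orderOf_eq_one]
          group
        rw [hone, map_one]
      have hz1 : z ≠ 1 := by
        intro hc
        have h1 : (⟨h * x * h⁻¹, hyP⟩ : (P : Subgroup G)) = 1 :=
          hfaithful (by rw [← hzdef, hc, map_one])
        have h2 : h * x * h⁻¹ = 1 := congrArg Subtype.val h1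
        have hx1 : x = 1 := by
          have : x = h⁻¹ * (h * x * h⁻¹) * h := by group
          rw [this, h2]; group
        rw [hx1, orderOf_one] at hx
        exact hp.one_lt.ne' hx.symm
      have hterm : ∀ i ∈ Finset.Icc 1 (p - 1), lam0 (h * x ^ i * h⁻¹) = z ^ i := by
        intro i _
        have hconj : h * x ^ i * h⁻¹ = (h * x * h⁻¹) ^ i := conj_pow.symm
        rw [hconj]
        have hmemi : (h * x * h⁻¹) ^ i ∈ (P : Subgroup G) := pow_mem hyP i
        simp only [lam0]
        rw [dif_pos hmemi]
        have : (⟨(h * x * h⁻¹) ^ i, hmemi⟩ : (P : Subgroup G))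
            = (⟨h * x * h⁻¹, hyP⟩ : (P : Subgroup G)) ^ i := by
          apply Subtype.ext; simp
        rw [this, map_pow]
      rw [Finset.sum_congr rfl hterm]
      have h1 : ∑ i ∈ Finset.range p, z ^ i = 0 := by
        rw [geom_sum_eq hz1 p, hzp, sub_self, zero_div]
      have h2 : Finset.Icc 1 (p - 1) = (Finset.range p).erase 0 := by
        have hp1 : 1 ≤ p := hp.one_lt.le
        ext a
        simp only [Finset.mem_Icc, Finset.mem_erase, Finset.mem_range]
        omega
      rw [h2, Finset.sum_erase_eq_sub (Finset.mem_range.mpr hp.pos), h1, pow_zero]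
      ring
    · rw [if_neg hN]
      apply Finset.sum_eq_zero
      intro i hi
      simp only [Finset.mem_Icc] at hi
      have hp1 : 2 ≤ p := hp.two_le
      have hnd : ¬ p ∣ i := by
        intro hd
        have := Nat.le_of_dvd (by omega) hd
        omega
      have hnP : h * x ^ i * h⁻¹ ∉ (P : Subgroup G) :=
        fun hc => hN (aux_mem_normalizer P hP hxP hx hnd hc)
      simp only [lam0]
      exact dif_neg hnP
  -- the sum over i of χ (x ^ i)
  have hsum : ∑ i ∈ Finset.Icc 1 (p - 1), χ (x ^ i)
      = (1 / (Nat.card (P : Subgroup G) : ℂ)) * (-(Fintype.card N : ℂ)) := by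
    simp only [χ]
    rw [← Finset.mul_sum]
    congr 1
    rw [Finset.sum_comm]
    rw [Finset.sum_congr rfl (fun h _ => hkey h)]
    rw [Finset.sum_ite, Finset.sum_const, Finset.sum_const_zero, add_zero, nsmul_eq_mul]
    have hfil : (Finset.univ.filter (fun h : G => h ∈ N)).card = Fintype.card N :=
      (Fintype.card_subtype _).symm
    rw [hfil]
    ring
  rw [hchi1, hsum]
  have hNcard : (((P : Subgroup G).subgroupOf N).index : ℂ) * (Nat.card (P : Subgroup G) : ℂ)
      = (Fintype.card N : ℂ) := by
    have h1 : ((P : Subgroup G).subgroupOf N).index * Nat.card ((P : Subgroup G).subgroupOf N)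
        = Nat.card N := Subgroup.index_mul_card _
    have h2 : Nat.card ((P : Subgroup G).subgroupOf N) = Nat.card (P : Subgroup G) :=
      Nat.card_congr (Subgroup.subgroupOfEquivOfLe hPN).toEquiv
    rw [← Nat.card_eq_fintype_card, ← h1, h2, Nat.cast_mul]
  rw [← hNcard]
  have hrw : (1 / (Nat.card (P : Subgroup G) : ℂ)) *
      (-((((P : Subgroup G).subgroupOf N).index : ℂ) * (Nat.card (P : Subgroup G) : ℂ)))
      = -(((P : Subgroup G).subgroupOf N).index : ℂ) := by
    field_simp
  rw [hrw]
  ring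
end
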